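/- Let k be an algebraically closed field and ℓ ⊆ k an algebraically closed subfield with k of infinite transcendence degree over ℓ. Suppose {C_i}_{i∈ℕ} is a countable family of constructible subsets of the affine line 𝔸¹_k = Spec k[T] such that each C_i is the base change to k of a constructible subset C_i^ℓ ⊆ 𝔸¹_ℓ, and such that every k-point of 𝔸¹_k lies in some C_i. Then some C_i is dense in 𝔸¹_k. -/

import Mathlib

open AlgebraicGeometry CategoryTheory Limits

noncomputable section

namespace FG

/-- The base scheme `Spec k` attached to a field `k`. -/
abbrev 𝕊 (k : Type) [Field k] : Scheme := Spec (CommRingCat.of k)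

/-- A field has infinite transcendence degree over its prime field iff it contains a countably
infinite family which is algebraically independent over `ℤ` (equivalently, over the prime
field). -/
def InfiniteTrdegOverPrimeField (k : Type) [Field k] : Prop :=
  ∃ f : ℕ → k, AlgebraicIndependent ℤ f

attribute [local instance] MvPolynomial.gradedAlgebra

/-- Projective `n`-space over `Spec ℤ`, as `Proj ℤ[x₀,…,xₙ]`. -/
def ProjectiveSpaceZ (n : ℕ) : Scheme :=
  Proj (MvPolynomial.homogeneousSubmodule (Fin (n + 1)) ℤ)

/-- The canonical morphism to the terminal scheme `Spec ℤ`. -/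
def toSpecZ (X : Scheme) : X ⟶ Spec (CommRingCat.of ℤ) := specZIsTerminal.from X

/-- Relative projective `n`-space over a scheme `S`. -/
def ProjectiveSpaceOver (n : ℕ) (S : Scheme) : Scheme :=
  pullback (toSpecZ (ProjectiveSpaceZ n)) (toSpecZ S)

/-- The structure morphism `ℙⁿ_S ⟶ S`. -/
def projectiveSpaceProj (n : ℕ) (S : Scheme) : ProjectiveSpaceOver n S ⟶ S :=
  pullback.snd (toSpecZ (ProjectiveSpaceZ n)) (toSpecZ S)

/-- `f : 𝒳 ⟶ S` is a projective morphism: it factors as a closed immersion into some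
relative projective space `ℙⁿ_S` followed by the projection to `S`. -/
def IsProjectiveFamily {𝒳 S : Scheme} (f : 𝒳 ⟶ S) : Prop :=
  ∃ (n : ℕ) (i : 𝒳 ⟶ ProjectiveSpaceOver n S),
    IsClosedImmersion i ∧ i ≫ projectiveSpaceProj n S = f

/-- The family `g : 𝒴 ⟶ T` is (globally) trivial with fibre `X/k`, i.e. isomorphic over `T`
to the projection `X ×ₖ T ⟶ T`; here `τ : T ⟶ 𝕊 k` is the structure morphism of `T`. -/
def IsTrivialFamilyWithFibre {k : Type} [Field k] {X T 𝒴 : Scheme}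
    (πX : X ⟶ 𝕊 k) (τ : T ⟶ 𝕊 k) (g : 𝒴 ⟶ T) : Prop :=
  ∃ e : 𝒴 ≅ pullback πX τ, e.hom ≫ pullback.snd πX τ = g

/-- `f : 𝒳 ⟶ S` is fibrewise trivial with fibre `X`: for every `k`-point `s` of `S`, the fibre
`𝒳ₛ` is isomorphic to `X` over `k`. -/
def FibrewiseTrivial {k : Type} [Field k] {X 𝒳 S : Scheme}
    (πX : X ⟶ 𝕊 k) (πS : S ⟶ 𝕊 k) (f : 𝒳 ⟶ S) : Prop :=
  ∀ s : 𝕊 k ⟶ S, s ≫ πS = 𝟙 (𝕊 k) →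
    ∃ e : pullback f s ≅ X, e.hom ≫ πX = pullback.snd f s

/-- `f : 𝒳 ⟶ S` is isotrivial at the `k`-point `s` of `S` (with fibre `X/k`): there is an étale
neighbourhood `V ⟶ S` of `s` over which the family becomes trivial. -/
def IsotrivialAt {k : Type} [Field k] {X 𝒳 S : Scheme} (πX : X ⟶ 𝕊 k) (πS : S ⟶ 𝕊 k)
    (f : 𝒳 ⟶ S) (s : 𝕊 k ⟶ S) : Prop :=
  ∃ (V : Scheme) (g : V ⟶ S) (_ : IsEtale g) (v : 𝕊 k ⟶ V), v ≫ g = s ∧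
    IsTrivialFamilyWithFibre πX (g ≫ πS) (pullback.snd f g)

/-- Spec of the ring of dual numbers over `A`. -/
def specDN (A : Type) [CommRing A] : Scheme := Spec (CommRingCat.of (DualNumber A))

/-- The closed immersion `Spec A ⟶ Spec A[ε]`. -/
def dnPt (A : Type) [CommRing A] : Spec (CommRingCat.of A) ⟶ specDN A :=
  Spec.map (CommRingCat.ofHom (TrivSqZeroExt.fstHom A A A).toRingHom)

/-- The retraction `Spec A[ε] ⟶ Spec A`. -/
def dnRetr (A : Type) [CommRing A] : specDN A ⟶ Spec (CommRingCat.of A) :=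
  Spec.map (CommRingCat.ofHom (algebraMap A (DualNumber A)))

/-- The constant tangent vector with the same centre as `v`. -/
def constTangent {A : Type} [CommRing A] {S : Scheme} (v : specDN A ⟶ S) : specDN A ⟶ S :=
  dnRetr A ≫ dnPt A ≫ v

/-- Vanishing of the Kodaira–Spencer map `KS_f : 𝒯_{S/k} ⟶ R¹f⁎𝒯_{𝒳/S}` of `f` over `k`,
expressed in terms of first order deformations: for every tangent vector
`v : Spec A[ε] ⟶ S` over `k`, the induced first-order deformation of the family is trivial,
i.e. the pullback of `f` along `v` is isomorphic to the pullback along the constant tangent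
vector with the same centre. -/
def KodairaSpencerVanishes {k : Type} [Field k] {𝒳 S : Scheme} (f : 𝒳 ⟶ S)
    (πS : S ⟶ 𝕊 k) : Prop :=
  ∀ (A : Type) (_ : CommRing A) (v : specDN A ⟶ S),
    v ≫ πS = constTangent v ≫ πS →
    ∃ e : pullback f v ≅ pullback f (constTangent v),
      e.hom ≫ pullback.snd f (constTangent v) = pullback.snd f v

/-- The unique point of `Spec k` for a field `k`. -/
def specPt (k : Type) [Field k] : 𝕊 k := (⟨⊥, Ideal.bot_prime⟩ : PrimeSpectrum k)

/-- The `n`-th infinitesimal neighbourhood `Sₙ = Spec (𝒪_{S,s}/𝔪ₛⁿ⁺¹)` of a `k`-point `s`. -/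
def infinNbhd {k : Type} [Field k] {S : Scheme} (s : 𝕊 k ⟶ S) (n : ℕ) : Scheme :=
  Spec (CommRingCat.of ((S.presheaf.stalk (s.base (specPt k))) ⧸
    (IsLocalRing.maximalIdeal (S.presheaf.stalk (s.base (specPt k)))) ^ (n + 1)))

/-- The canonical morphism `Sₙ ⟶ S`. -/
def infinNbhdIncl {k : Type} [Field k] {S : Scheme} (s : 𝕊 k ⟶ S) (n : ℕ) :
    infinNbhd s n ⟶ S :=
  Spec.map (CommRingCat.ofHom (Ideal.Quotient.mk _)) ≫ S.fromSpecStalk _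

/-- `f : 𝒳 ⟶ S` is formally trivial at the `k`-point `s`, with fibre `X/k`: for every `n`, the
deformation `𝒳 ×_S Sₙ ⟶ Sₙ` is trivial with fibre `X`. -/
def FormallyTrivialAt {k : Type} [Field k] {X 𝒳 S : Scheme} (πX : X ⟶ 𝕊 k) (πS : S ⟶ 𝕊 k)
    (f : 𝒳 ⟶ S) (s : 𝕊 k ⟶ S) : Prop :=
  ∀ n : ℕ,
    IsTrivialFamilyWithFibre πX (infinNbhdIncl s n ≫ πS) (pullback.snd f (infinNbhdIncl s n))

/-- A ring homomorphism is flat if it turns the target into a flat module over the source. -/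
def RingHomFlat {R S : Type} [CommRing R] [CommRing S] (φ : R →+* S) : Prop :=
  letI := φ.toAlgebra
  Module.Flat R S

/-- A morphism of schemes is flat if all of its stalk maps are flat. -/
def Flat {X Y : Scheme} (f : X ⟶ Y) : Prop :=
  ∀ x : X, RingHomFlat (f.stalkMap x).hom

/-- The scheme `(A, pA)` together with the universal automorphism `Ω` represents the
automorphism functor `T ↦ Aut_T (X ×ₖ T)` of the `k`-scheme `X`; i.e. `A = Aut^X_k`. -/
structure RepresentsAut {k : Type} [Field k] {X A : Scheme} (πX : X ⟶ 𝕊 k) (pA : A ⟶ 𝕊 k)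
    (Ω : pullback πX pA ⟶ pullback πX pA) : Prop where
  isOver : Ω ≫ pullback.snd πX pA = pullback.snd πX pA
  isIso : IsIso Ω
  universal : ∀ (T : Scheme) (τ : T ⟶ 𝕊 k) (θ : pullback πX τ ⟶ pullback πX τ),
    θ ≫ pullback.snd πX τ = pullback.snd πX τ → IsIso θ →
    ∃! σ : { σ : T ⟶ A // σ ≫ pA = τ },
      θ ≫ pullback.map πX τ πX pA (𝟙 X) σ.1 (𝟙 (𝕊 k)) (by simp)
          (by rw [Category.comp_id, σ.2]) =
        pullback.map πX τ πX pA (𝟙 X) σ.1 (𝟙 (𝕊 k)) (by simp)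
          (by rw [Category.comp_id, σ.2]) ≫ Ω

/-- The `S`-scheme `(I, pI)` together with the universal isomorphism `Ω` represents the
functor `T ↦ Isom_T (𝒳 ×_S T, X ×ₖ T)` of isomorphisms from `𝒳/S` to the constant family
with fibre `X/k`; i.e. `I = Isom_S^{𝒳, X ×ₖ S}`. -/
structure RepresentsIsomToConst {k : Type} [Field k] {X 𝒳 S I : Scheme}
    (f : 𝒳 ⟶ S) (πX : X ⟶ 𝕊 k) (πS : S ⟶ 𝕊 k) (pI : I ⟶ S)
    (Ω : pullback f pI ⟶ pullback πX (pI ≫ πS)) : Prop where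
  isOver : Ω ≫ pullback.snd πX (pI ≫ πS) = pullback.snd f pI
  isIso : IsIso Ω
  universal : ∀ (T : Scheme) (t : T ⟶ S) (θ : pullback f t ⟶ pullback πX (t ≫ πS)),
    θ ≫ pullback.snd πX (t ≫ πS) = pullback.snd f t → IsIso θ →
    ∃! h : { h : T ⟶ I // h ≫ pI = t },
      pullback.map f t f pI (𝟙 𝒳) h.1 (𝟙 S) (by simp) (by rw [Category.comp_id, h.2]) ≫ Ω =
        θ ≫ pullback.map πX (t ≫ πS) πX (pI ≫ πS) (𝟙 X) h.1 (𝟙 (𝕊 k)) (by simp)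
          (by rw [Category.comp_id, ← Category.assoc, h.2])


/-- A constructible subset of a topological space: a finite union of intersections of an open
and a closed subset. -/
def IsConstructibleSet {α : Type} [TopologicalSpace α] (C : Set α) : Prop :=
  ∃ (n : ℕ) (U Z : Fin n → Set α),
    (∀ i, IsOpen (U i)) ∧ (∀ i, IsClosed (Z i)) ∧ C = ⋃ i, U i ∩ Z i

/-- A subfield `ℓ ⊆ k` has finite transcendence degree over the prime field iff for some `n`
there is no algebraically independent `n`-tuple in `ℓ` over `ℤ` (equivalently, over the prime
field). -/
def FiniteTrdegOverPrimeField (k : Type) [Field k] (ℓ : Subfield k) : Prop :=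
  ∃ n : ℕ, ∀ g : Fin n → ℓ, ¬ AlgebraicIndependent ℤ g

/-- **Step 1 of Proposition 3.1: the affine line.**
Let `ℓ ⊆ k` be algebraically closed fields with `k` of infinite transcendence degree over `ℓ`.
If `{Cᵢ}` is a countable family of constructible subsets of `𝔸¹ₖ = Spec k[T]`, each the base
change of a constructible subset `Cℓ i ⊆ 𝔸¹_ℓ`, and the `Cᵢ` cover all `k`-points of `𝔸¹ₖ`,
then some `Cᵢ` is dense in `𝔸¹ₖ`. -/
theorem exists_dense_of_countable_constructible_cover_affine_line
    (k : Type) [Field k] [IsAlgClosed k]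
    (ℓ : Type) [Field ℓ] [IsAlgClosed ℓ] [Algebra ℓ k]
    (htr : ∃ g : ℕ → k, AlgebraicIndependent ℓ g)
    (C : ℕ → Set (Spec (CommRingCat.of (Polynomial k)) : Scheme))
    (hC : ∀ i, IsConstructibleSet (C i))
    (Cℓ : ℕ → Set (Spec (CommRingCat.of (Polynomial ℓ)) : Scheme))
    (hCℓ : ∀ i, IsConstructibleSet (Cℓ i))
    (hbc : ∀ i, C i =
      (Spec.map (CommRingCat.ofHom (Polynomial.mapRingHom (algebraMap ℓ k)))).base ⁻¹' (Cℓ i))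
    (hcover : ∀ s : 𝕊 k ⟶ Spec (CommRingCat.of (Polynomial k)),
      s ≫ Spec.map (CommRingCat.ofHom (Polynomial.C : k →+* Polynomial k)) = 𝟙 (𝕊 k) →
      ∃ i, Set.range s.base ⊆ C i) :
    ∃ i, Dense (C i) := by
  obtain ⟨g, hg⟩ := htr
  set a := g 0 with ha
  have htra : Transcendental ℓ a := hg.transcendental 0
  -- the section at a
  set s₀ : (𝕊 k : Scheme) ⟶ Spec (CommRingCat.of (Polynomial k)) :=
    Spec.map (CommRingCat.ofHom (Polynomial.evalRingHom a)) with hs₀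
  have hsec : s₀ ≫ Spec.map (CommRingCat.ofHom (Polynomial.C : k →+* Polynomial k)) = 𝟙 (𝕊 k) := by
    rw [hs₀, ← Spec.map_comp, ← Spec.map_id]
    congr 1
    ext x
    simp
  obtain ⟨i, hi⟩ := hcover s₀ hsec
  refine ⟨i, ?_⟩
  -- the image point x₀
  set φ : (Spec (CommRingCat.of (Polynomial k)) : Scheme) ⟶ Spec (CommRingCat.of (Polynomial ℓ)) :=
    Spec.map (CommRingCat.ofHom (Polynomial.mapRingHom (algebraMap ℓ k))) with hφ
  set x₀ : (Spec (CommRingCat.of (Polynomial k)) : Scheme) :=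
    s₀.base (⟨⊥, Ideal.bot_prime⟩ : PrimeSpectrum k) with hx₀
  have hx₀C : x₀ ∈ C i := hi ⟨_, rfl⟩
  have hx₀Cℓ : φ.base x₀ ∈ Cℓ i := by
    rw [hbc i] at hx₀C; exact hx₀C
  -- the generic point of 𝔸¹_k
  set η : (Spec (CommRingCat.of (Polynomial k)) : Scheme) :=
    (⟨⊥, Ideal.bot_prime⟩ : PrimeSpectrum (Polynomial k)) with hη
  have hmapinj : Function.Injective (Polynomial.mapRingHom (algebraMap ℓ k)) :=
    Polynomial.map_injective _ (algebraMap ℓ k).injective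
  have key : φ.base η = φ.base x₀ := by
    show PrimeSpectrum.comap (Polynomial.mapRingHom (algebraMap ℓ k))
        (⟨⊥, Ideal.bot_prime⟩ : PrimeSpectrum (Polynomial k)) =
      PrimeSpectrum.comap (Polynomial.mapRingHom (algebraMap ℓ k))
        (PrimeSpectrum.comap (Polynomial.evalRingHom a)
          (⟨⊥, Ideal.bot_prime⟩ : PrimeSpectrum k))
    apply PrimeSpectrum.ext
    ext p
    simp only [PrimeSpectrum.comap_asIdeal, Ideal.mem_comap, Ideal.mem_bot]
    constructor
    · rintro h
      have : p = 0 := by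
        apply hmapinj
        simpa using h
      simp [this]
    · intro h
      have haeval : (Polynomial.aeval a) p = 0 := by
        rw [Polynomial.aeval_def, ← Polynomial.eval_map]
        simpa using h
      have : p = 0 := transcendental_iff.mp htra p haeval
      simp [this]
  have hηC : η ∈ C i := by
    rw [hbc i]
    show φ.base η ∈ Cℓ i
    rw [key]; exact hx₀Cℓ
  have : closure (C i) = Set.univ := by
    apply Set.eq_univ_of_univ_subset
    have h1 : closure {η} ⊆ closure (C i) := closure_mono (Set.singleton_subset_iff.2 hηC)
    refine le_trans ?_ h1
    show Set.univ ⊆ closure {η}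
    have : closure {(⟨⊥, Ideal.bot_prime⟩ : PrimeSpectrum (Polynomial k))} =
        PrimeSpectrum.zeroLocus ((⊥ : Ideal (Polynomial k)) : Set (Polynomial k)) := by
      rw [PrimeSpectrum.closure_singleton]
    show Set.univ ⊆ closure {(⟨⊥, Ideal.bot_prime⟩ : PrimeSpectrum (Polynomial k))}
    rw [this]
    intro x _
    simp [PrimeSpectrum.mem_zeroLocus]
  rw [dense_iff_closure_eq]
  exact this

end FG
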